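/- arXiv:1610.04293 — 2 statements merged into one kernel-verified Lean document; each statement's English description precedes it below -/
import Mathlib

section
/- Let (X_t) be a reversible Markov chain on a countable state space with symmetric kernel Q of spectral radius ρ_Q, and let A be a finite subset of the state space. Started from the uniform distribution on A, the probability that the chain returns to A at some positive time is at most ρ_Q. -/
open Classical

/-- `kpow Q n` is the `n`-step transition kernel obtained from the one-step kernel `Q`. -/
noncomputable def kpow {V : Type*} (Q : V → V → ℝ) : ℕ → V → V → ℝ
  | 0 => fun x y => if x = y then 1 else 0
  | (n + 1) => fun x y => ∑' z, kpow Q n x z * Q z y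

/-- The kernel `Q` with all transitions into `A` suppressed. -/
noncomputable def kAvoid {V : Type*} (Q : V → V → ℝ) (A : Set V) : V → V → ℝ :=
  fun x y => if y ∈ A then 0 else Q x y

/-- `returnProb Q A a = P_a[T_A^+ < ∞]`: the probability that the chain with kernel `Q`
started at `a` visits `A` at some positive time (decomposed according to the first
positive visit time). -/
noncomputable def returnProb {V : Type*} (Q : V → V → ℝ) (A : Finset V) (a : V) : ℝ :=
  ∑' t : ℕ, ∑' z : V, kpow (kAvoid Q (A : Set V)) t a z * ∑ b ∈ A, Q z b

namespace BNPaux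

variable {V : Type*}

noncomputable def gA (Q : V → V → ℝ) (A : Finset V) (z : V) : ℝ := ∑ b ∈ A, Q z b

noncomputable def fA (Q : V → V → ℝ) (A : Finset V) (t : ℕ) (z : V) : ℝ :=
  ∑ a ∈ A, kpow (kAvoid Q (A : Set V)) t a z

section basic

variable {Q : V → V → ℝ} {A : Finset V}

lemma Qrow (hstoch : ∀ x, HasSum (Q x) 1) (x : V) : Summable (Q x) := (hstoch x).summable

lemma Qtsum (hstoch : ∀ x, HasSum (Q x) 1) (x : V) : ∑' y, Q x y = 1 := (hstoch x).tsum_eq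

lemma Qle1 (hnonneg : ∀ x y, 0 ≤ Q x y) (hstoch : ∀ x, HasSum (Q x) 1) (x y : V) :
    Q x y ≤ 1 := by
  have := Summable.le_tsum (Qrow hstoch x) y (fun j _ => hnonneg x j)
  rwa [Qtsum hstoch x] at this

lemma Qcol_summable (hstoch : ∀ x, HasSum (Q x) 1) (hsym : ∀ x y, Q x y = Q y x) (y : V) :
    Summable (fun x => Q x y) := by
  have : (fun x => Q x y) = Q y := by funext x; exact hsym x y
  rw [this]; exact Qrow hstoch y

lemma Qcol_tsum (hstoch : ∀ x, HasSum (Q x) 1) (hsym : ∀ x y, Q x y = Q y x) (y : V) :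
    ∑' x, Q x y = 1 := by
  have : (fun x => Q x y) = Q y := by funext x; exact hsym x y
  rw [this]; exact Qtsum hstoch y

lemma P_nonneg (hnonneg : ∀ x y, 0 ≤ Q x y) (x y : V) : 0 ≤ kAvoid Q (A : Set V) x y := by
  unfold kAvoid; split <;> simp [hnonneg x y]

lemma P_le_Q (hnonneg : ∀ x y, 0 ≤ Q x y) (x y : V) : kAvoid Q (A : Set V) x y ≤ Q x y := by
  unfold kAvoid; split <;> simp [hnonneg x y]

lemma P_eq_of_not_mem {y : V} (hy : y ∉ A) (x : V) : kAvoid Q (A : Set V) x y = Q x y := by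
  unfold kAvoid; simp [hy]

lemma P_eq_zero {y : V} (hy : y ∈ A) (x : V) : kAvoid Q (A : Set V) x y = 0 := by
  unfold kAvoid; simp [hy]

lemma p_nonneg (hnonneg : ∀ x y, 0 ≤ Q x y) (t : ℕ) (a z : V) :
    0 ≤ kpow (kAvoid Q (A : Set V)) t a z := by
  induction t generalizing a z with
  | zero => unfold kpow; split <;> norm_num
  | succ n ih =>
    show 0 ≤ ∑' z', kpow (kAvoid Q (A : Set V)) n a z' * kAvoid Q (A : Set V) z' z
    exact tsum_nonneg fun z' => mul_nonneg (ih a z') (P_nonneg hnonneg z' z)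

lemma p_summable_tsum (hnonneg : ∀ x y, 0 ≤ Q x y) (hstoch : ∀ x, HasSum (Q x) 1)
    (t : ℕ) (a : V) :
    Summable (kpow (kAvoid Q (A : Set V)) t a) ∧
      ∑' z, kpow (kAvoid Q (A : Set V)) t a z ≤ 1 := by
  induction t with
  | zero =>
    constructor
    · apply summable_of_ne_finset_zero (s := {a})
      intro b hb
      simp only [Finset.mem_singleton] at hb
      show (if a = b then (1:ℝ) else 0) = 0
      simp [Ne.symm hb]
    · rw [tsum_eq_sum (s := {a}) (by
        intro b hb
        simp only [Finset.mem_singleton] at hb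
        show (if a = b then (1:ℝ) else 0) = 0
        simp [Ne.symm hb])]
      simp [kpow]
  | succ n ih =>
    obtain ⟨hsum, hle⟩ := ih
    have hterm : ∀ z z' : V, 0 ≤ kpow (kAvoid Q (A : Set V)) n a z' * kAvoid Q (A : Set V) z' z :=
      fun z z' => mul_nonneg (p_nonneg hnonneg n a z') (P_nonneg hnonneg z' z)
    have hinner : ∀ z : V, Summable (fun z' =>
        kpow (kAvoid Q (A : Set V)) n a z' * kAvoid Q (A : Set V) z' z) := by
      intro z
      apply Summable.of_nonneg_of_le (hterm z) _ hsum
      intro z'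
      calc kpow (kAvoid Q (A : Set V)) n a z' * kAvoid Q (A : Set V) z' z
          ≤ kpow (kAvoid Q (A : Set V)) n a z' * 1 := by
            apply mul_le_mul_of_nonneg_left _ (p_nonneg hnonneg n a z')
            exact le_trans (P_le_Q hnonneg z' z) (Qle1 hnonneg hstoch z' z)
        _ = kpow (kAvoid Q (A : Set V)) n a z' := mul_one _
    have hfin : ∀ S : Finset V, ∑ z ∈ S, kpow (kAvoid Q (A : Set V)) (n+1) a z ≤ 1 := by
      intro S
      have hswap : ∑ z ∈ S, ∑' z', kpow (kAvoid Q (A : Set V)) n a z' * kAvoid Q (A : Set V) z' z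
          = ∑' z', ∑ z ∈ S, kpow (kAvoid Q (A : Set V)) n a z' * kAvoid Q (A : Set V) z' z := by
        rw [Summable.tsum_finsetSum (fun z _ => hinner z)]
      show ∑ z ∈ S, ∑' z', kpow (kAvoid Q (A : Set V)) n a z' * kAvoid Q (A : Set V) z' z ≤ 1
      rw [hswap]
      have hb : ∀ z' : V, ∑ z ∈ S, kpow (kAvoid Q (A : Set V)) n a z' * kAvoid Q (A : Set V) z' z
          ≤ kpow (kAvoid Q (A : Set V)) n a z' := by
        intro z'
        rw [← Finset.mul_sum]
        calc kpow (kAvoid Q (A : Set V)) n a z' * ∑ z ∈ S, kAvoid Q (A : Set V) z' z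
            ≤ kpow (kAvoid Q (A : Set V)) n a z' * 1 := by
              apply mul_le_mul_of_nonneg_left _ (p_nonneg hnonneg n a z')
              calc ∑ z ∈ S, kAvoid Q (A : Set V) z' z ≤ ∑ z ∈ S, Q z' z :=
                    Finset.sum_le_sum fun z _ => P_le_Q hnonneg z' z
                _ ≤ ∑' z, Q z' z := Summable.sum_le_tsum S (fun z _ => hnonneg z' z) (Qrow hstoch z')
                _ = 1 := Qtsum hstoch z'
          _ = kpow (kAvoid Q (A : Set V)) n a z' := mul_one _
      calc ∑' z', ∑ z ∈ S, kpow (kAvoid Q (A : Set V)) n a z' * kAvoid Q (A : Set V) z' z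
          ≤ ∑' z', kpow (kAvoid Q (A : Set V)) n a z' := by
            apply Summable.tsum_le_tsum hb _ hsum
            exact summable_sum fun z _ => hinner z
        _ ≤ 1 := hle
    have hsum' : Summable (kpow (kAvoid Q (A : Set V)) (n+1) a) :=
      summable_of_sum_le (fun z => p_nonneg hnonneg (n+1) a z) hfin
    exact ⟨hsum', Summable.tsum_le_of_sum_le hsum' hfin⟩

end basic


section fa

variable {Q : V → V → ℝ} {A : Finset V}

lemma f_nonneg (hnonneg : ∀ x y, 0 ≤ Q x y) (t : ℕ) (z : V) : 0 ≤ fA Q A t z :=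
  Finset.sum_nonneg fun a _ => p_nonneg hnonneg t a z

lemma f_summable (hnonneg : ∀ x y, 0 ≤ Q x y) (hstoch : ∀ x, HasSum (Q x) 1) (t : ℕ) :
    Summable (fA Q A t) :=
  summable_sum fun a _ => (p_summable_tsum hnonneg hstoch t a).1

lemma f_tsum_le (hnonneg : ∀ x y, 0 ≤ Q x y) (hstoch : ∀ x, HasSum (Q x) 1) (t : ℕ) :
    ∑' z, fA Q A t z ≤ A.card := by
  unfold fA
  rw [Summable.tsum_finsetSum (fun a _ => (p_summable_tsum hnonneg hstoch t a).1)]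
  calc ∑ a ∈ A, ∑' z, kpow (kAvoid Q (A : Set V)) t a z ≤ ∑ a ∈ A, (1:ℝ) :=
        Finset.sum_le_sum fun a _ => (p_summable_tsum hnonneg hstoch t a).2
    _ = A.card := by simp

lemma f_zero (z : V) : fA Q A 0 z = if z ∈ A then 1 else 0 := by
  unfold fA
  show (∑ a ∈ A, if a = z then (1:ℝ) else 0) = _
  rw [Finset.sum_ite_eq' A z (fun _ => (1:ℝ))]

lemma f_rec (hnonneg : ∀ x y, 0 ≤ Q x y) (hstoch : ∀ x, HasSum (Q x) 1) (t : ℕ) (z : V) :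
    fA Q A (t+1) z = ∑' z', fA Q A t z' * kAvoid Q (A : Set V) z' z := by
  unfold fA
  show (∑ a ∈ A, ∑' z', kpow (kAvoid Q (A : Set V)) t a z' * kAvoid Q (A : Set V) z' z) = _
  rw [← Summable.tsum_finsetSum (f := fun a z' => kpow (kAvoid Q (A : Set V)) t a z' * kAvoid Q (A : Set V) z' z)]
  · congr 1; funext z'; rw [Finset.sum_mul]
  · intro a _
    refine Summable.of_nonneg_of_le
      (fun z' => mul_nonneg (p_nonneg hnonneg t a z') (P_nonneg (A := A) hnonneg z' z))
      (fun z' => ?_) ((p_summable_tsum (A := A) hnonneg hstoch t a).1)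
    calc kpow (kAvoid Q (A : Set V)) t a z' * kAvoid Q (A : Set V) z' z
        ≤ kpow (kAvoid Q (A : Set V)) t a z' * 1 :=
          mul_le_mul_of_nonneg_left
            (le_trans (P_le_Q hnonneg z' z) (Qle1 hnonneg hstoch z' z)) (p_nonneg hnonneg t a z')
      _ = _ := mul_one _

lemma fmulP_summable (hnonneg : ∀ x y, 0 ≤ Q x y) (hstoch : ∀ x, HasSum (Q x) 1) (t : ℕ) (z : V) :
    Summable (fun z' => fA Q A t z' * kAvoid Q (A : Set V) z' z) := by
  refine Summable.of_nonneg_of_le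
    (fun z' => mul_nonneg (f_nonneg hnonneg t z') (P_nonneg (A := A) hnonneg z' z))
    (fun z' => ?_) (f_summable (A := A) hnonneg hstoch t)
  calc fA Q A t z' * kAvoid Q (A : Set V) z' z ≤ fA Q A t z' * 1 :=
        mul_le_mul_of_nonneg_left
          (le_trans (P_le_Q hnonneg z' z) (Qle1 hnonneg hstoch z' z)) (f_nonneg hnonneg t z')
    _ = _ := mul_one _

lemma fmulQ_summable (hnonneg : ∀ x y, 0 ≤ Q x y) (hstoch : ∀ x, HasSum (Q x) 1)
    (hsym : ∀ x y, Q x y = Q y x) (t : ℕ) (z : V) :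
    Summable (fun z' => fA Q A t z' * Q z' z) := by
  refine Summable.of_nonneg_of_le
    (fun z' => mul_nonneg (f_nonneg hnonneg t z') (hnonneg z' z))
    (fun z' => ?_) (f_summable (A := A) hnonneg hstoch t)
  calc fA Q A t z' * Q z' z ≤ fA Q A t z' * 1 :=
        mul_le_mul_of_nonneg_left (Qle1 hnonneg hstoch z' z) (f_nonneg hnonneg t z')
    _ = _ := mul_one _

lemma f_le_one (hnonneg : ∀ x y, 0 ≤ Q x y) (hstoch : ∀ x, HasSum (Q x) 1)
    (hsym : ∀ x y, Q x y = Q y x) (t : ℕ) (z : V) : fA Q A t z ≤ 1 := by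
  induction t generalizing z with
  | zero => rw [f_zero]; split <;> norm_num
  | succ n ih =>
    rw [f_rec hnonneg hstoch]
    calc ∑' z', fA Q A n z' * kAvoid Q (A : Set V) z' z ≤ ∑' z', Q z' z := by
          apply Summable.tsum_le_tsum _ (fmulP_summable hnonneg hstoch n z) (Qcol_summable hstoch hsym z)
          intro z'
          calc fA Q A n z' * kAvoid Q (A : Set V) z' z ≤ 1 * Q z' z := by
                apply mul_le_mul (ih z') (P_le_Q hnonneg z' z) (P_nonneg hnonneg z' z)
                norm_num
            _ = Q z' z := one_mul _
      _ = 1 := Qcol_tsum hstoch hsym z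

lemma f_on_A (hnonneg : ∀ x y, 0 ≤ Q x y) (hstoch : ∀ x, HasSum (Q x) 1)
    {z : V} (hz : z ∈ A) (t : ℕ) : fA Q A (t+1) z = 0 := by
  rw [f_rec hnonneg hstoch]
  have : ∀ z' : V, fA Q A t z' * kAvoid Q (A : Set V) z' z = 0 := by
    intro z'; rw [P_eq_zero hz, mul_zero]
  simp [this]

lemma g_nonneg (hnonneg : ∀ x y, 0 ≤ Q x y) (z : V) : 0 ≤ gA Q A z :=
  Finset.sum_nonneg fun b _ => hnonneg z b

lemma g_le_one (hnonneg : ∀ x y, 0 ≤ Q x y) (hstoch : ∀ x, HasSum (Q x) 1) (z : V) :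
    gA Q A z ≤ 1 := by
  unfold gA
  calc ∑ b ∈ A, Q z b ≤ ∑' b, Q z b := Summable.sum_le_tsum A (fun b _ => hnonneg z b) (Qrow hstoch z)
    _ = 1 := Qtsum hstoch z

lemma P_col_tsum (hnonneg : ∀ x y, 0 ≤ Q x y) (hstoch : ∀ x, HasSum (Q x) 1) (z' : V) :
    ∑' z, kAvoid Q (A : Set V) z' z = 1 - gA Q A z' := by
  have h1 : ∀ z, kAvoid Q (A : Set V) z' z = Q z' z - (if z ∈ A then Q z' z else 0) := by
    intro z; unfold kAvoid; by_cases hz : z ∈ A <;> simp [hz]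
  have hind : Summable (fun z => if z ∈ A then Q z' z else 0) := by
    apply summable_of_ne_finset_zero (s := A)
    intro b hb; simp [hb]
  have hind_tsum : ∑' z, (if z ∈ A then Q z' z else 0) = gA Q A z' := by
    rw [tsum_eq_sum (s := A) (by intro b hb; simp [hb])]
    unfold gA
    exact Finset.sum_congr rfl fun b hb => by simp [hb]
  calc ∑' z, kAvoid Q (A : Set V) z' z
      = ∑' z, (Q z' z - (if z ∈ A then Q z' z else 0)) := by
        congr 1; funext z; exact h1 z
    _ = (∑' z, Q z' z) - ∑' z, (if z ∈ A then Q z' z else 0) :=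
        Summable.tsum_sub (Qrow hstoch z') hind
    _ = 1 - gA Q A z' := by rw [Qtsum hstoch z', hind_tsum]

end fa


section telescope

variable {Q : V → V → ℝ} {A : Finset V}

lemma fmulg_summable (hnonneg : ∀ x y, 0 ≤ Q x y) (hstoch : ∀ x, HasSum (Q x) 1) (t : ℕ) :
    Summable (fun z => fA Q A t z * gA Q A z) := by
  refine Summable.of_nonneg_of_le
    (fun z => mul_nonneg (f_nonneg hnonneg t z) (g_nonneg hnonneg z))
    (fun z => ?_) (f_summable (A := A) hnonneg hstoch t)
  calc fA Q A t z * gA Q A z ≤ fA Q A t z * 1 :=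
        mul_le_mul_of_nonneg_left (g_le_one hnonneg hstoch z) (f_nonneg hnonneg t z)
    _ = _ := mul_one _

lemma M_rec (hnonneg : ∀ x y, 0 ≤ Q x y) (hstoch : ∀ x, HasSum (Q x) 1) (t : ℕ) :
    ∑' z, fA Q A (t+1) z = (∑' z, fA Q A t z) - ∑' z, fA Q A t z * gA Q A z := by
  have hrow : ∀ z' : V, Summable (fun z => fA Q A t z' * kAvoid Q (A : Set V) z' z) := by
    intro z'
    apply Summable.mul_left
    refine Summable.of_nonneg_of_le (fun z => P_nonneg (A := A) hnonneg z' z)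
      (fun z => P_le_Q hnonneg z' z) (Qrow hstoch z')
  have hrowtsum : ∀ z' : V, ∑' z, fA Q A t z' * kAvoid Q (A : Set V) z' z
      = fA Q A t z' * (1 - gA Q A z') := by
    intro z'
    rw [tsum_mul_left, P_col_tsum hnonneg hstoch z']
  have hsums : Summable (fun z' => ∑' z, fA Q A t z' * kAvoid Q (A : Set V) z' z) := by
    refine Summable.of_nonneg_of_le (fun z' => ?_) (fun z' => ?_)
      (f_summable (A := A) hnonneg hstoch t)
    · rw [hrowtsum z']
      apply mul_nonneg (f_nonneg hnonneg t z')
      have := g_le_one (A := A) hnonneg hstoch z'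
      linarith
    · rw [hrowtsum z']
      calc fA Q A t z' * (1 - gA Q A z') ≤ fA Q A t z' * 1 := by
            apply mul_le_mul_of_nonneg_left _ (f_nonneg hnonneg t z')
            have := g_nonneg (A := A) hnonneg z'
            linarith
        _ = _ := mul_one _
  have huncurry : Summable (Function.uncurry
      (fun z' z => fA Q A t z' * kAvoid Q (A : Set V) z' z)) := by
    rw [summable_prod_of_nonneg (by
      intro p
      exact mul_nonneg (f_nonneg hnonneg t p.1) (P_nonneg hnonneg p.1 p.2))]
    exact ⟨hrow, hsums⟩
  have hswap := Summable.tsum_comm' huncurry hrow (fun z => fmulP_summable hnonneg hstoch t z)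
  calc ∑' z, fA Q A (t+1) z
      = ∑' z, ∑' z', fA Q A t z' * kAvoid Q (A : Set V) z' z := by
        congr 1; funext z; exact f_rec hnonneg hstoch t z
    _ = ∑' z', ∑' z, fA Q A t z' * kAvoid Q (A : Set V) z' z := hswap
    _ = ∑' z', (fA Q A t z' - fA Q A t z' * gA Q A z') := by
        congr 1; funext z'; rw [hrowtsum z']; ring
    _ = (∑' z, fA Q A t z) - ∑' z, fA Q A t z * gA Q A z :=
        Summable.tsum_sub (f_summable hnonneg hstoch t) (fmulg_summable hnonneg hstoch t)

lemma M_zero : ∑' z, fA Q A 0 z = (A.card : ℝ) := by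
  rw [tsum_eq_sum (s := A) (by intro b hb; rw [f_zero]; simp [hb])]
  have : ∀ b ∈ A, fA Q A 0 b = 1 := by intro b hb; rw [f_zero]; simp [hb]
  rw [Finset.sum_congr rfl this]
  simp

lemma U_partial (hnonneg : ∀ x y, 0 ≤ Q x y) (hstoch : ∀ x, HasSum (Q x) 1) (T : ℕ) :
    ∑ t ∈ Finset.range T, (∑' z, fA Q A t z * gA Q A z)
      = (A.card : ℝ) - ∑' z, fA Q A T z := by
  induction T with
  | zero => simp [M_zero]
  | succ n ih =>
    rw [Finset.sum_range_succ, ih, M_rec hnonneg hstoch n]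
    ring

lemma U_partial_le (hnonneg : ∀ x y, 0 ≤ Q x y) (hstoch : ∀ x, HasSum (Q x) 1) (T : ℕ) :
    ∑ t ∈ Finset.range T, (∑' z, fA Q A t z * gA Q A z) ≤ (A.card : ℝ) := by
  rw [U_partial hnonneg hstoch T]
  have : 0 ≤ ∑' z, fA Q A T z := tsum_nonneg fun z => f_nonneg hnonneg T z
  linarith

lemma U_nonneg (hnonneg : ∀ x y, 0 ≤ Q x y) (t : ℕ) :
    0 ≤ ∑' z, fA Q A t z * gA Q A z :=
  tsum_nonneg fun z => mul_nonneg (f_nonneg hnonneg t z) (g_nonneg hnonneg z)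

lemma U_summable (hnonneg : ∀ x y, 0 ≤ Q x y) (hstoch : ∀ x, HasSum (Q x) 1) :
    Summable (fun t => ∑' z, fA Q A t z * gA Q A z) :=
  summable_of_sum_range_le (fun t => U_nonneg hnonneg t) (U_partial_le hnonneg hstoch)

end telescope


noncomputable def hW (Q : V → V → ℝ) (A : Finset V) (T : ℕ) (z : V) : ℝ :=
  ∑ t ∈ Finset.range T, fA Q A t z

section ell2

variable {Q : V → V → ℝ} {A : Finset V} {ρQ : ℝ}

lemma h_nonneg (hnonneg : ∀ x y, 0 ≤ Q x y) (T : ℕ) (z : V) : 0 ≤ hW Q A T z :=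
  Finset.sum_nonneg fun t _ => f_nonneg hnonneg t z

lemma h_le (hnonneg : ∀ x y, 0 ≤ Q x y) (hstoch : ∀ x, HasSum (Q x) 1)
    (hsym : ∀ x y, Q x y = Q y x) (T : ℕ) (z : V) : hW Q A T z ≤ (T : ℝ) := by
  unfold hW
  calc ∑ t ∈ Finset.range T, fA Q A t z ≤ ∑ t ∈ Finset.range T, (1:ℝ) :=
        Finset.sum_le_sum fun t _ => f_le_one hnonneg hstoch hsym t z
    _ = T := by simp

lemma h_summable (hnonneg : ∀ x y, 0 ≤ Q x y) (hstoch : ∀ x, HasSum (Q x) 1) (T : ℕ) :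
    Summable (hW Q A T) :=
  summable_sum fun t _ => f_summable hnonneg hstoch t

lemma hsq_summable (hnonneg : ∀ x y, 0 ≤ Q x y) (hstoch : ∀ x, HasSum (Q x) 1)
    (hsym : ∀ x y, Q x y = Q y x) (T : ℕ) :
    Summable (fun z => hW Q A T z * hW Q A T z) := by
  refine Summable.of_nonneg_of_le
    (fun z => mul_nonneg (h_nonneg hnonneg T z) (h_nonneg hnonneg T z))
    (fun z => ?_) ((h_summable (A := A) hnonneg hstoch T).mul_left (T : ℝ))
  exact mul_le_mul_of_nonneg_right (h_le hnonneg hstoch hsym T z) (h_nonneg hnonneg T z)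

lemma h_on_A (hnonneg : ∀ x y, 0 ≤ Q x y) (hstoch : ∀ x, HasSum (Q x) 1)
    {z : V} (hz : z ∈ A) (n : ℕ) : hW Q A (n+1) z = 1 := by
  unfold hW
  rw [Finset.sum_range_succ' (fun t => fA Q A t z) n]
  have h1 : ∀ k, fA Q A (k+1) z = 0 := fun k => f_on_A hnonneg hstoch hz k
  simp [h1, f_zero, hz]

lemma hQcol_summable (hnonneg : ∀ x y, 0 ≤ Q x y) (hstoch : ∀ x, HasSum (Q x) 1)
    (hsym : ∀ x y, Q x y = Q y x) (T : ℕ) (z : V) :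
    Summable (fun z' => hW Q A T z' * Q z' z) := by
  refine Summable.of_nonneg_of_le
    (fun z' => mul_nonneg (h_nonneg hnonneg T z') (hnonneg z' z))
    (fun z' => mul_le_mul_of_nonneg_right (h_le hnonneg hstoch hsym T z') (hnonneg z' z))
    ((Qcol_summable hstoch hsym z).mul_left (T : ℝ))

lemma QH_nonneg (hnonneg : ∀ x y, 0 ≤ Q x y) (T : ℕ) (z : V) :
    0 ≤ ∑' z', hW Q A T z' * Q z' z :=
  tsum_nonneg fun z' => mul_nonneg (h_nonneg hnonneg T z') (hnonneg z' z)

lemma QH_le (hnonneg : ∀ x y, 0 ≤ Q x y) (hstoch : ∀ x, HasSum (Q x) 1)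
    (hsym : ∀ x y, Q x y = Q y x) (T : ℕ) (z : V) :
    ∑' z', hW Q A T z' * Q z' z ≤ (T : ℝ) := by
  calc ∑' z', hW Q A T z' * Q z' z ≤ ∑' z', (T : ℝ) * Q z' z := by
        apply Summable.tsum_le_tsum _ (hQcol_summable hnonneg hstoch hsym T z)
          ((Qcol_summable hstoch hsym z).mul_left (T : ℝ))
        exact fun z' => mul_le_mul_of_nonneg_right (h_le hnonneg hstoch hsym T z') (hnonneg z' z)
    _ = (T : ℝ) := by rw [tsum_mul_left, Qcol_tsum hstoch hsym z, mul_one]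

lemma hHQH_summable (hnonneg : ∀ x y, 0 ≤ Q x y) (hstoch : ∀ x, HasSum (Q x) 1)
    (hsym : ∀ x y, Q x y = Q y x) (T : ℕ) :
    Summable (fun z => hW Q A T z * ∑' z', hW Q A T z' * Q z' z) := by
  refine Summable.of_nonneg_of_le
    (fun z => mul_nonneg (h_nonneg hnonneg T z) (QH_nonneg hnonneg T z))
    (fun z => mul_le_mul_of_nonneg_left (QH_le hnonneg hstoch hsym T z) (h_nonneg hnonneg T z))
    ((h_summable (A := A) hnonneg hstoch T).mul_right (T : ℝ))

lemma h_le_QH (hnonneg : ∀ x y, 0 ≤ Q x y) (hstoch : ∀ x, HasSum (Q x) 1)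
    (hsym : ∀ x y, Q x y = Q y x) (T : ℕ) {z : V} (hz : z ∉ A) :
    hW Q A T z ≤ ∑' z', hW Q A T z' * Q z' z := by
  have key : ∑' z', hW Q A T z' * Q z' z = ∑ t ∈ Finset.range T, fA Q A (t+1) z := by
    calc ∑' z', hW Q A T z' * Q z' z
        = ∑' z', ∑ t ∈ Finset.range T, fA Q A t z' * Q z' z := by
          congr 1; funext z'; rw [hW, Finset.sum_mul]
      _ = ∑ t ∈ Finset.range T, ∑' z', fA Q A t z' * Q z' z :=
          Summable.tsum_finsetSum fun t _ => fmulQ_summable hnonneg hstoch hsym t z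
      _ = ∑ t ∈ Finset.range T, fA Q A (t+1) z := by
          apply Finset.sum_congr rfl
          intro t _
          rw [f_rec hnonneg hstoch t z]
          congr 1; funext z'; rw [P_eq_of_not_mem hz]
  rw [key]
  cases T with
  | zero => simp [hW]
  | succ n =>
    rw [hW, Finset.sum_range_succ' (fun t => fA Q A t z) n]
    have h0 : fA Q A 0 z = 0 := by rw [f_zero]; simp [hz]
    rw [h0, add_zero, Finset.sum_range_succ]
    have := f_nonneg (A := A) hnonneg (n+1) z
    linarith

end ell2


section bilinear

variable {Q : V → V → ℝ} {ρQ : ℝ}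

lemma rho_nonneg
    (hnorm : ∀ f g : V →₀ ℝ,
      |∑ x ∈ f.support, ∑ y ∈ g.support, f x * Q x y * g y| ≤
        ρQ * Real.sqrt (∑ x ∈ f.support, f x ^ 2) * Real.sqrt (∑ y ∈ g.support, g y ^ 2))
    (v : V) : 0 ≤ ρQ := by
  have h := hnorm (Finsupp.single v 1) (Finsupp.single v 1)
  rw [Finsupp.support_single_ne_zero v one_ne_zero] at h
  simp only [Finset.sum_singleton, Finsupp.single_eq_same, one_pow, Real.sqrt_one] at h
  have habs : (0:ℝ) ≤ |1 * Q v v * 1| := abs_nonneg _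
  linarith

lemma bilinear_finite
    (hρ0 : 0 ≤ ρQ)
    (hnorm : ∀ f g : V →₀ ℝ,
      |∑ x ∈ f.support, ∑ y ∈ g.support, f x * Q x y * g y| ≤
        ρQ * Real.sqrt (∑ x ∈ f.support, f x ^ 2) * Real.sqrt (∑ y ∈ g.support, g y ^ 2))
    (H : V → ℝ) (hHnn : ∀ z, 0 ≤ H z) (hHsq : Summable fun z => H z * H z) (F : Finset V) :
    ∑ x ∈ F, ∑ y ∈ F, H x * Q x y * H y ≤ ρQ * ∑' z, H z * H z := by
  classical
  set φ : V →₀ ℝ := Finsupp.indicator F (fun x _ => H x) with hφdef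
  have hφ : ∀ x ∈ F, φ x = H x := fun x hx => Finsupp.indicator_of_mem hx _
  have hsupp : φ.support ⊆ F :=
    Finset.coe_subset.mp (Finsupp.support_indicator_subset F _)
  have step1 : ∑ x ∈ F, ∑ y ∈ F, H x * Q x y * H y
      = ∑ x ∈ φ.support, ∑ y ∈ φ.support, φ x * Q x y * φ y := by
    have e1 : ∑ x ∈ F, ∑ y ∈ F, H x * Q x y * H y
        = ∑ x ∈ F, ∑ y ∈ F, φ x * Q x y * φ y := by
      apply Finset.sum_congr rfl
      intro x hx
      apply Finset.sum_congr rfl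
      intro y hy
      rw [hφ x hx, hφ y hy]
    rw [e1]
    rw [← Finset.sum_subset hsupp (by
      intro x _ hx
      apply Finset.sum_eq_zero
      intro y _
      rw [Finsupp.notMem_support_iff.mp hx, zero_mul, zero_mul])]
    apply Finset.sum_congr rfl
    intro x _
    rw [← Finset.sum_subset hsupp (by
      intro y _ hy
      rw [Finsupp.notMem_support_iff.mp hy, mul_zero])]
  have hS : ∑ x ∈ φ.support, φ x ^ 2 ≤ ∑' z, H z * H z := by
    have e2 : ∑ x ∈ φ.support, φ x ^ 2 = ∑ x ∈ φ.support, H x * H x := by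
      apply Finset.sum_congr rfl
      intro x hx
      rw [hφ x (hsupp hx), pow_two]
    rw [e2]
    exact Summable.sum_le_tsum φ.support (fun z _ => mul_nonneg (hHnn z) (hHnn z)) hHsq
  have hSnn : (0:ℝ) ≤ ∑ x ∈ φ.support, φ x ^ 2 :=
    Finset.sum_nonneg fun x _ => sq_nonneg _
  have h := hnorm φ φ
  have habs : ∑ x ∈ φ.support, ∑ y ∈ φ.support, φ x * Q x y * φ y
      ≤ |∑ x ∈ φ.support, ∑ y ∈ φ.support, φ x * Q x y * φ y| := le_abs_self _
  have hsqrt : ρQ * Real.sqrt (∑ x ∈ φ.support, φ x ^ 2) * Real.sqrt (∑ x ∈ φ.support, φ x ^ 2)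
      = ρQ * ∑ x ∈ φ.support, φ x ^ 2 := by
    rw [mul_assoc, Real.mul_self_sqrt hSnn]
  rw [step1]
  calc ∑ x ∈ φ.support, ∑ y ∈ φ.support, φ x * Q x y * φ y
      ≤ ρQ * ∑ x ∈ φ.support, φ x ^ 2 := by rw [← hsqrt]; exact le_trans habs h
    _ ≤ ρQ * ∑' z, H z * H z := mul_le_mul_of_nonneg_left hS hρ0

end bilinear

section bil_tsum

variable {Q : V → V → ℝ} {A : Finset V} {ρQ : ℝ}

lemma bilinear_tsum
    (hnonneg : ∀ x y, 0 ≤ Q x y) (hstoch : ∀ x, HasSum (Q x) 1)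
    (hsym : ∀ x y, Q x y = Q y x) (hρ0 : 0 ≤ ρQ)
    (hnorm : ∀ f g : V →₀ ℝ,
      |∑ x ∈ f.support, ∑ y ∈ g.support, f x * Q x y * g y| ≤
        ρQ * Real.sqrt (∑ x ∈ f.support, f x ^ 2) * Real.sqrt (∑ y ∈ g.support, g y ^ 2))
    (T : ℕ) :
    ∑' z, hW Q A T z * (∑' z', hW Q A T z' * Q z' z)
      ≤ ρQ * ∑' z, hW Q A T z * hW Q A T z := by
  set H : V → ℝ := hW Q A T with hHdef
  have hHnn : ∀ z, 0 ≤ H z := h_nonneg hnonneg T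
  have hHsq : Summable fun z => H z * H z := hsq_summable hnonneg hstoch hsym T
  set N : ℝ := ∑' z, H z * H z with hNdef
  apply Summable.tsum_le_of_sum_le (hHQH_summable hnonneg hstoch hsym T)
  intro F
  have hre : ∀ z, H z * (∑' z', H z' * Q z' z) = ∑' z', H z' * Q z' z * H z := by
    intro z
    rw [mul_comm, tsum_mul_right]
  have hswap : ∑ z ∈ F, H z * (∑' z', H z' * Q z' z)
      = ∑' z', ∑ z ∈ F, H z' * Q z' z * H z := by
    rw [Finset.sum_congr rfl (fun z _ => hre z)]
    rw [Summable.tsum_finsetSum (fun z _ => (hQcol_summable hnonneg hstoch hsym T z).mul_right (H z))]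
  rw [hswap]
  apply Summable.tsum_le_of_sum_le
    (summable_sum fun z _ => (hQcol_summable hnonneg hstoch hsym T z).mul_right (H z))
  intro F'
  set G : Finset V := F ∪ F' with hGdef
  calc ∑ z' ∈ F', ∑ z ∈ F, H z' * Q z' z * H z
      ≤ ∑ z' ∈ F', ∑ z ∈ G, H z' * Q z' z * H z := by
        apply Finset.sum_le_sum
        intro z' _
        apply Finset.sum_le_sum_of_subset_of_nonneg Finset.subset_union_left
        intro z _ _
        exact mul_nonneg (mul_nonneg (hHnn z') (hnonneg z' z)) (hHnn z)
    _ ≤ ∑ z' ∈ G, ∑ z ∈ G, H z' * Q z' z * H z := by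
        apply Finset.sum_le_sum_of_subset_of_nonneg Finset.subset_union_right
        intro z' _ _
        exact Finset.sum_nonneg fun z _ =>
          mul_nonneg (mul_nonneg (hHnn z') (hnonneg z' z)) (hHnn z)
    _ ≤ ρQ * N := bilinear_finite hρ0 hnorm H hHnn hHsq G

end bil_tsum


section main

variable {Q : V → V → ℝ} {A : Finset V} {ρQ : ℝ}

lemma partial_le_of_rho_le_one
    (hnonneg : ∀ x y, 0 ≤ Q x y) (hstoch : ∀ x, HasSum (Q x) 1)
    (hsym : ∀ x y, Q x y = Q y x) (hρ0 : 0 ≤ ρQ) (hρ1 : ρQ ≤ 1)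
    (hnorm : ∀ f g : V →₀ ℝ,
      |∑ x ∈ f.support, ∑ y ∈ g.support, f x * Q x y * g y| ≤
        ρQ * Real.sqrt (∑ x ∈ f.support, f x ^ 2) * Real.sqrt (∑ y ∈ g.support, g y ^ 2))
    (T : ℕ) :
    ∑ t ∈ Finset.range T, (∑' z, fA Q A t z * gA Q A z) ≤ ρQ * A.card := by
  cases T with
  | zero => simp; positivity
  | succ n =>
    set m : ℕ := n + 1 with hmdef
    set H : V → ℝ := hW Q A m with hHdef
    have hHnn : ∀ z, 0 ≤ H z := h_nonneg hnonneg m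
    have hHsq : Summable fun z => H z * H z := hsq_summable hnonneg hstoch hsym m
    have hHQH : Summable fun z => H z * ∑' z', H z' * Q z' z :=
      hHQH_summable hnonneg hstoch hsym m
    -- the partial sum equals D
    have hD : ∑ t ∈ Finset.range m, (∑' z, fA Q A t z * gA Q A z)
        = ∑' z, H z * gA Q A z := by
      rw [← Summable.tsum_finsetSum (fun t _ => fmulg_summable hnonneg hstoch t)]
      congr 1; funext z
      rw [hHdef, hW, Finset.sum_mul]
    rw [hD]
    set D : ℝ := ∑' z, H z * gA Q A z with hDdef
    set W : ℝ := ∑' (z : ↑((A : Set V)ᶜ)), H z * H z with hWdef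
    have hW0 : 0 ≤ W :=
      tsum_nonneg fun z => mul_nonneg (hHnn z) (hHnn z)
    have honA : ∀ z ∈ A, H z = 1 := fun z hz => h_on_A hnonneg hstoch hz n
    -- N = card + W
    have hN : ∑' z, H z * H z = (A.card : ℝ) + W := by
      rw [← Summable.tsum_subtype_add_tsum_subtype_compl hHsq (A : Set V)]
      congr 1
      rw [Finset.tsum_subtype' A (fun z => H z * H z)]
      rw [Finset.sum_congr rfl (fun z hz => by rw [honA z hz, one_mul])]
      simp
    -- Term1 = D
    have hT1 : ∑ z ∈ A, H z * (∑' z', H z' * Q z' z) = D := by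
      rw [Finset.sum_congr rfl (fun z hz => by rw [honA z hz, one_mul])]
      rw [← Summable.tsum_finsetSum (fun b _ => hQcol_summable hnonneg hstoch hsym m b)]
      rw [hDdef]
      congr 1; funext z'
      rw [gA, Finset.mul_sum]
    -- Term2 ≥ W
    have hT2 : W ≤ ∑' (z : ↑((A : Set V)ᶜ)), H z * (∑' z', H z' * Q z' z) := by
      apply Summable.tsum_le_tsum _ (hHsq.subtype _) (hHQH.subtype _)
      intro z
      have hz : (z : V) ∉ A := z.2
      exact mul_le_mul_of_nonneg_left (h_le_QH hnonneg hstoch hsym m hz) (hHnn z)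
    -- total
    have hsplit : ∑ z ∈ A, H z * (∑' z', H z' * Q z' z)
        + ∑' (z : ↑((A : Set V)ᶜ)), H z * (∑' z', H z' * Q z' z)
        = ∑' z, H z * (∑' z', H z' * Q z' z) := by
      rw [← Summable.tsum_subtype_add_tsum_subtype_compl hHQH (A : Set V)]
      congr 1
      exact (Finset.tsum_subtype' A (fun z => H z * (∑' z', H z' * Q z' z))).symm
    have hbil := bilinear_tsum (A := A) hnonneg hstoch hsym hρ0 hnorm m
    rw [hN] at hbil
    have hfin : D + W ≤ ρQ * ((A.card : ℝ) + W) := by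
      calc D + W ≤ ∑ z ∈ A, H z * (∑' z', H z' * Q z' z)
            + ∑' (z : ↑((A : Set V)ᶜ)), H z * (∑' z', H z' * Q z' z) := by
            rw [hT1]; linarith
        _ = ∑' z, H z * (∑' z', H z' * Q z' z) := hsplit
        _ ≤ ρQ * ((A.card : ℝ) + W) := hbil
    nlinarith

end main


section assemble

variable {Q : V → V → ℝ} {A : Finset V}

lemma pmulg_summable (hnonneg : ∀ x y, 0 ≤ Q x y) (hstoch : ∀ x, HasSum (Q x) 1)
    (t : ℕ) (a : V) :
    Summable (fun z => kpow (kAvoid Q (A : Set V)) t a z * gA Q A z) := by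
  refine Summable.of_nonneg_of_le
    (fun z => mul_nonneg (p_nonneg hnonneg t a z) (g_nonneg hnonneg z))
    (fun z => ?_) ((p_summable_tsum (A := A) hnonneg hstoch t a).1)
  calc kpow (kAvoid Q (A : Set V)) t a z * gA Q A z
      ≤ kpow (kAvoid Q (A : Set V)) t a z * 1 :=
        mul_le_mul_of_nonneg_left (g_le_one hnonneg hstoch z) (p_nonneg hnonneg t a z)
    _ = _ := mul_one _

lemma u_le_U (hnonneg : ∀ x y, 0 ≤ Q x y) (hstoch : ∀ x, HasSum (Q x) 1)
    (t : ℕ) {a : V} (ha : a ∈ A) :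
    ∑' z, kpow (kAvoid Q (A : Set V)) t a z * gA Q A z ≤ ∑' z, fA Q A t z * gA Q A z := by
  apply Summable.tsum_le_tsum _ (pmulg_summable hnonneg hstoch t a) (fmulg_summable hnonneg hstoch t)
  intro z
  apply mul_le_mul_of_nonneg_right _ (g_nonneg hnonneg z)
  exact Finset.single_le_sum (f := fun a' => kpow (kAvoid Q (A : Set V)) t a' z)
    (fun a' _ => p_nonneg hnonneg t a' z) ha

lemma sum_u_eq_U (hnonneg : ∀ x y, 0 ≤ Q x y) (hstoch : ∀ x, HasSum (Q x) 1) (t : ℕ) :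
    ∑ a ∈ A, ∑' z, kpow (kAvoid Q (A : Set V)) t a z * gA Q A z
      = ∑' z, fA Q A t z * gA Q A z := by
  rw [← Summable.tsum_finsetSum (f := fun a z => kpow (kAvoid Q (A : Set V)) t a z * gA Q A z)
    (fun a _ => pmulg_summable hnonneg hstoch t a)]
  congr 1; funext z
  rw [fA, Finset.sum_mul]

end assemble

end BNPaux

/-- Let `(X_t)` be a reversible Markov chain on a countable state space with symmetric
kernel `Q` whose `ℓ²` operator norm (spectral radius) is at most `ρ_Q`, and let `A` be a
finite nonempty subset of the state space. Started from the uniform distribution on `A`,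
the probability that the chain returns to `A` at some positive time is at most `ρ_Q`. -/
theorem stmt10 {V : Type*} [Countable V] (Q : V → V → ℝ) (ρQ : ℝ)
    (hnonneg : ∀ x y, 0 ≤ Q x y)
    (hstoch : ∀ x, HasSum (Q x) 1)
    (hsym : ∀ x y, Q x y = Q y x)
    (hnorm : ∀ f g : V →₀ ℝ,
      |∑ x ∈ f.support, ∑ y ∈ g.support, f x * Q x y * g y| ≤
        ρQ * Real.sqrt (∑ x ∈ f.support, f x ^ 2) * Real.sqrt (∑ y ∈ g.support, g y ^ 2))
    (A : Finset V) (hA : A.Nonempty) :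
    (A.card : ℝ)⁻¹ * ∑ a ∈ A, returnProb Q A a ≤ ρQ := by
  classical
  obtain ⟨v, hv⟩ := hA
  have hρ0 : 0 ≤ ρQ := BNPaux.rho_nonneg hnorm v
  have hcard : (0:ℝ) < A.card := by
    have : 0 < A.card := Finset.card_pos.mpr ⟨v, hv⟩
    exact_mod_cast this
  -- partial sums of U are bounded by ρQ * card
  have hU_partial : ∀ T : ℕ,
      ∑ t ∈ Finset.range T, (∑' z, BNPaux.fA Q A t z * BNPaux.gA Q A z) ≤ ρQ * A.card := by
    intro T
    rcases le_or_gt ρQ 1 with hρ1 | hρ1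
    · exact BNPaux.partial_le_of_rho_le_one hnonneg hstoch hsym hρ0 hρ1 hnorm T
    · calc ∑ t ∈ Finset.range T, (∑' z, BNPaux.fA Q A t z * BNPaux.gA Q A z)
          ≤ (A.card : ℝ) := BNPaux.U_partial_le hnonneg hstoch T
        _ = 1 * (A.card : ℝ) := (one_mul _).symm
        _ ≤ ρQ * A.card := by
            apply mul_le_mul_of_nonneg_right (le_of_lt hρ1) (le_of_lt hcard)
  have hUsum : Summable (fun t => ∑' z, BNPaux.fA Q A t z * BNPaux.gA Q A z) :=
    BNPaux.U_summable hnonneg hstoch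
  have htsumU : ∑' t : ℕ, (∑' z, BNPaux.fA Q A t z * BNPaux.gA Q A z) ≤ ρQ * A.card :=
    Summable.tsum_le_of_sum_range_le hUsum hU_partial
  -- rewrite the sum of return probabilities
  have hu_summable : ∀ a ∈ A, Summable (fun t : ℕ =>
      ∑' z, kpow (kAvoid Q (A : Set V)) t a z * BNPaux.gA Q A z) := by
    intro a ha
    refine Summable.of_nonneg_of_le (fun t => ?_)
      (fun t => BNPaux.u_le_U hnonneg hstoch t ha) hUsum
    exact tsum_nonneg fun z =>
      mul_nonneg (BNPaux.p_nonneg hnonneg t a z) (BNPaux.g_nonneg hnonneg z)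
  have hsum_eq : ∑ a ∈ A, returnProb Q A a
      = ∑' t : ℕ, (∑' z, BNPaux.fA Q A t z * BNPaux.gA Q A z) := by
    have e1 : ∑ a ∈ A, returnProb Q A a
        = ∑' t : ℕ, ∑ a ∈ A, ∑' z, kpow (kAvoid Q (A : Set V)) t a z * BNPaux.gA Q A z := by
      rw [Summable.tsum_finsetSum (f := fun a t => ∑' z, kpow (kAvoid Q (A : Set V)) t a z * BNPaux.gA Q A z)
        hu_summable]
      rfl
    rw [e1]
    congr 1; funext t
    exact BNPaux.sum_u_eq_U hnonneg hstoch t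
  rw [hsum_eq]
  calc (A.card : ℝ)⁻¹ * ∑' t : ℕ, (∑' z, BNPaux.fA Q A t z * BNPaux.gA Q A z)
      ≤ (A.card : ℝ)⁻¹ * (ρQ * A.card) := by
        apply mul_le_mul_of_nonneg_left htsumU (le_of_lt (inv_pos.mpr hcard))
    _ = ρQ := by field_simp
end

section
/- Let (Z_λ)_{λ>0} be Poisson(λ) random variables. The distribution of Z_λ conditioned on Z_λ ≥ 1 is stochastically increasing in λ: for λ₁ ≤ λ₂ and every k, P[Z_{λ₁} ≥ k | Z_{λ₁} ≥ 1] ≤ P[Z_{λ₂} ≥ k | Z_{λ₂} ≥ 1]. -/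
open MeasureTheory ProbabilityTheory

noncomputable def gg (x : NNReal) (n : ℕ) : ENNReal := ENNReal.ofReal ((x : ℝ) ^ n / (n.factorial : ℝ))

noncomputable def SS (x : NNReal) (k : ℕ) : ENNReal := ∑' n, if k ≤ n then gg x n else 0

lemma pm_apply (r : NNReal) (k : ℕ) :
    poissonMeasure r {n | k ≤ n} = ENNReal.ofReal (Real.exp (-r)) * SS r k := by
  rw [poissonMeasure, Measure.sum_apply _ (by trivial : MeasurableSet {n | k ≤ n}),
    SS, ← ENNReal.tsum_mul_left]
  refine tsum_congr fun n => ?_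
  rw [Measure.smul_apply, Measure.dirac_apply' _ (by trivial), Set.indicator_apply, smul_eq_mul]
  by_cases h : k ≤ n
  · simp only [Set.mem_setOf_eq, h, if_true, Pi.one_apply, mul_one]
    rw [gg]
    rw [mul_div_assoc, ENNReal.ofReal_mul (Real.exp_nonneg _)]
  · simp [Set.mem_setOf_eq, h]

lemma pow_key {a b : NNReal} (hab : a ≤ b) {m j : ℕ} (hmj : m ≤ j) :
    (a : ℝ) ^ j * (b : ℝ) ^ m ≤ (b : ℝ) ^ j * (a : ℝ) ^ m := by
  obtain ⟨d, rfl⟩ : ∃ d, j = m + d := ⟨j - m, by omega⟩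
  have h1 : (a : ℝ) ^ d ≤ (b : ℝ) ^ d := pow_le_pow_left₀ a.2 hab d
  have h2 : (0 : ℝ) ≤ (a : ℝ) ^ m * (b : ℝ) ^ m := by positivity
  calc (a : ℝ) ^ (m + d) * (b : ℝ) ^ m = (a : ℝ) ^ m * (b : ℝ) ^ m * (a : ℝ) ^ d := by
        rw [pow_add]; ring
    _ ≤ (a : ℝ) ^ m * (b : ℝ) ^ m * (b : ℝ) ^ d := by gcongr
    _ = (b : ℝ) ^ (m + d) * (a : ℝ) ^ m := by rw [pow_add]; ring

lemma gg_key {a b : NNReal} (hab : a ≤ b) {m j : ℕ} (hmj : m ≤ j) :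
    gg a j * gg b m ≤ gg b j * gg a m := by
  rw [gg, gg, gg, gg,
    ← ENNReal.ofReal_mul (by positivity : (0:ℝ) ≤ (a:ℝ)^j / (j.factorial:ℝ)),
    ← ENNReal.ofReal_mul (by positivity : (0:ℝ) ≤ (b:ℝ)^j / (j.factorial:ℝ))]
  refine ENNReal.ofReal_le_ofReal ?_
  rw [div_mul_div_comm, div_mul_div_comm]
  exact div_le_div_of_nonneg_right (pow_key hab hmj) (by positivity)

lemma key (a b : NNReal) (hab : a ≤ b) (k : ℕ) (hk : 1 ≤ k) :
    SS a k * SS b 1 ≤ SS b k * SS a 1 := by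
  set U : NNReal → ENNReal := fun x => ∑' m, if 1 ≤ m ∧ m < k then gg x m else 0 with hU
  have hsplit : ∀ x : NNReal, SS x 1 = U x + SS x k := by
    intro x
    rw [SS, SS, hU, ← ENNReal.tsum_add]
    refine tsum_congr fun m => ?_
    by_cases h1 : 1 ≤ m
    · by_cases h2 : k ≤ m
      · rw [if_pos h1, if_neg (by omega), if_pos h2, zero_add]
      · rw [if_pos h1, if_pos ⟨h1, by omega⟩, if_neg h2, add_zero]
    · rw [if_neg h1, if_neg (by omega), if_neg (by omega), add_zero]
  have cross : ∀ x y : NNReal, SS x k * U y =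
      ∑' j, ∑' m, (if k ≤ j then gg x j else 0) * (if 1 ≤ m ∧ m < k then gg y m else 0) := by
    intro x y
    rw [SS, ← ENNReal.tsum_mul_right]
    exact tsum_congr fun j => (ENNReal.tsum_mul_left).symm
  have hmain : SS a k * U b ≤ SS b k * U a := by
    rw [cross, cross]
    refine ENNReal.tsum_le_tsum fun j => ENNReal.tsum_le_tsum fun m => ?_
    by_cases h1 : k ≤ j <;> by_cases h2 : 1 ≤ m ∧ m < k <;> simp only [h1, h2, if_true, if_false]
    · exact gg_key hab (by omega)
    all_goals simp
  calc SS a k * SS b 1 = SS a k * U b + SS a k * SS b k := by rw [hsplit, mul_add]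
    _ ≤ SS b k * U a + SS b k * SS a k := by
        refine add_le_add hmain (le_of_eq (mul_comm _ _))
    _ = SS b k * SS a 1 := by rw [hsplit, mul_add]

/-- Let `Z_λ ~ Poisson(λ)`.  The distribution of `Z_λ` conditioned on `Z_λ ≥ 1` is
stochastically increasing in `λ`: for `λ₁ ≤ λ₂` (with `λ₁ > 0`) and every `k`,
`P[Z_{λ₁} ≥ k | Z_{λ₁} ≥ 1] ≤ P[Z_{λ₂} ≥ k | Z_{λ₂} ≥ 1]`. -/
theorem stmt14 (r₁ r₂ : NNReal) (h0 : 0 < r₁) (h12 : r₁ ≤ r₂) (k : ℕ) :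
    poissonMeasure r₁ {n | k ≤ n ∧ 1 ≤ n} / poissonMeasure r₁ {n | 1 ≤ n} ≤
      poissonMeasure r₂ {n | k ≤ n ∧ 1 ≤ n} / poissonMeasure r₂ {n | 1 ≤ n} := by
  have hset : {n : ℕ | k ≤ n ∧ 1 ≤ n} = {n : ℕ | max k 1 ≤ n} := by
    ext n; simp only [Set.mem_setOf_eq]; omega
  have hset1 : {n : ℕ | 1 ≤ n} = {n : ℕ | (1:ℕ) ≤ n} := rfl
  have hpos : ∀ r : NNReal, 0 < r → poissonMeasure r {n | (1:ℕ) ≤ n} ≠ 0 := by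
    intro r hr
    have h1 : poissonMeasure r {1} ≤ poissonMeasure r {n | (1:ℕ) ≤ n} :=
      measure_mono (by intro x hx; simp_all)
    have h2 : poissonMeasure r {1} = ENNReal.ofReal (poissonPMFReal r 1) :=
      poissonMeasure_singleton r 1
    have h3 : (0 : ENNReal) < ENNReal.ofReal (poissonPMFReal r 1) := by
      exact ENNReal.ofReal_pos.2 (poissonPMFReal_pos hr)
    exact fun h => absurd (h ▸ (h2 ▸ h1)) (by simp [h3.ne'])
  have hfin : ∀ r : NNReal, poissonMeasure r {n | (1:ℕ) ≤ n} ≠ ⊤ := fun r => measure_ne_top _ _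
  rw [hset]
  rw [ENNReal.le_div_iff_mul_le (Or.inl (hpos r₂ (h0.trans_le h12))) (Or.inl (hfin r₂)),
    div_eq_mul_inv, mul_right_comm, ← div_eq_mul_inv,
    ENNReal.div_le_iff_le_mul (Or.inl (hpos r₁ h0)) (Or.inl (hfin r₁))]
  rw [pm_apply r₁ (max k 1), pm_apply r₂ (max k 1),
    show {n : ℕ | 1 ≤ n} = {n : ℕ | (1:ℕ) ≤ n} from rfl, pm_apply r₁ 1, pm_apply r₂ 1]
  rw [mul_mul_mul_comm, mul_mul_mul_comm (ENNReal.ofReal (Real.exp (-r₂)))]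
  rw [show ENNReal.ofReal (Real.exp (-r₂)) * ENNReal.ofReal (Real.exp (-r₁))
      = ENNReal.ofReal (Real.exp (-r₁)) * ENNReal.ofReal (Real.exp (-r₂)) from mul_comm _ _]
  exact mul_le_mul_right (key r₁ r₂ h12 (max k 1) (le_max_right _ _)) _
end
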